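/- Let 1 < p < q < ∞ with q/p ≤ 1 + α/n for some α > 0, and let a ∈ L^∞(ℝ^n) be nonnegative and satisfy a(x) ≤ C₀(a(y) + |x−y|^α) for all x, y in any cube of measure at most 1. Then for every cube Q with |Q| ≤ 1 and every measurable f with ‖f‖_{L^p(ℝ^n)} ≤ 1, ⨍_Q φ(x, ⨍_Q |f| dy) dx ≤ C ⨍_Q φ(x,|f(x)|) dx, where φ(x,t) = (1/p)t^p + (1/q)a(x)t^q and C depends only on n, p, q, α, C₀, ‖a‖_∞. -/

import Mathlib

open MeasureTheory

/-- The axis-parallel cube with lower corner `z` and sidelength `ℓ`. -/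
def cube (n : ℕ) (z : Fin n → ℝ) (ℓ : ℝ) : Set (Fin n → ℝ) :=
  {x | ∀ i, z i ≤ x i ∧ x i ≤ z i + ℓ}

lemma cube_eq (n : ℕ) (z : Fin n → ℝ) (ℓ : ℝ) :
    cube n z ℓ = Set.univ.pi (fun i => Set.Icc (z i) (z i + ℓ)) := by
  ext x; simp [cube, Set.mem_pi, Set.mem_Icc, Pi.le_def, forall_and]

lemma cube_measurable (n : ℕ) (z : Fin n → ℝ) (ℓ : ℝ) : MeasurableSet (cube n z ℓ) := by
  rw [cube_eq]; exact MeasurableSet.univ_pi fun i => measurableSet_Icc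

lemma cube_volume (n : ℕ) (z : Fin n → ℝ) (ℓ : ℝ) (hℓ : 0 ≤ ℓ) :
    volume (cube n z ℓ) = ENNReal.ofReal (ℓ ^ n) := by
  rw [cube_eq, volume_pi_pi]
  simp [Real.volume_Icc, ENNReal.ofReal_pow hℓ]

lemma integrable_of_lint_ne_top {α : Type*} [MeasurableSpace α] {μ : Measure α} {g : α → ℝ}
    (hg : Measurable g) (h0 : ∀ x, 0 ≤ g x) (hfin : (∫⁻ x, ENNReal.ofReal (g x) ∂μ) ≠ ⊤) :
    Integrable g μ := by
  refine ⟨hg.aestronglyMeasurable, ?_⟩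
  rw [HasFiniteIntegral]
  simp_rw [fun x => Real.enorm_eq_ofReal (h0 x)]
  exact hfin.lt_top

lemma norm_sub_le_of_mem_cube (n : ℕ) (z : Fin n → ℝ) (ℓ : ℝ) (hℓ : 0 ≤ ℓ)
    {x y : Fin n → ℝ} (hx : x ∈ cube n z ℓ) (hy : y ∈ cube n z ℓ) : ‖x - y‖ ≤ ℓ := by
  rw [pi_norm_le_iff_of_nonneg hℓ]
  intro i
  have h1 := hx i; have h2 := hy i
  rw [Pi.sub_apply, Real.norm_eq_abs, abs_le]
  constructor <;> linarith [h1.1, h1.2, h2.1, h2.2]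


set_option maxHeartbeats 2000000 in
/-- Let `1 < p < q` with `q/p ≤ 1 + α/n` for some `α > 0`, and let
`a ∈ L^∞` be nonnegative with `a(x) ≤ C₀(a(y) + |x−y|^α)` for all `x, y` in any
cube of measure at most 1. Then there is `C` (depending only on `n, p, q, α, C₀, ‖a‖_∞`)
such that for every cube `Q` with `|Q| ≤ 1` and every `f` with `‖f‖_{L^p} ≤ 1`,
`⨍_Q φ(x, ⨍_Q |f|) dx ≤ C·⨍_Q φ(x,|f(x)|) dx`, where
`φ(x,t) = (1/p)t^p + (1/q)a(x)t^q`. -/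
theorem double_phase_jensen_small_cubes (n : ℕ) (hn : 0 < n) (p q α : ℝ)
    (hp : 1 < p) (hpq : p < q) (hα : 0 < α) (hgap : q / p ≤ 1 + α / n)
    (C₀ M : ℝ) (hC₀ : 0 < C₀)
    (a : (Fin n → ℝ) → ℝ) (ha : ∀ x, 0 ≤ a x) (hameas : Measurable a)
    (haM : ∀ x, a x ≤ M)
    (hahold : ∀ (z : Fin n → ℝ) (ℓ : ℝ), 0 < ℓ → ℓ ^ n ≤ 1 →
      ∀ x ∈ cube n z ℓ, ∀ y ∈ cube n z ℓ, a x ≤ C₀ * (a y + ‖x - y‖ ^ α))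
    (φ : (Fin n → ℝ) → ℝ → ℝ)
    (hφ : ∀ x t, φ x t = (1 / p) * t ^ p + (1 / q) * a x * t ^ q) :
    ∃ C : ℝ, 0 < C ∧
      ∀ (f : (Fin n → ℝ) → ℝ), Measurable f → (∫⁻ x, ENNReal.ofReal (|f x| ^ p)) ≤ 1 →
      ∀ (z : Fin n → ℝ) (ℓ : ℝ), 0 < ℓ → ℓ ^ n ≤ 1 →
        (∫⁻ x in cube n z ℓ,
            ENNReal.ofReal (φ x ((ℓ ^ n)⁻¹ * ∫ y in cube n z ℓ, |f y|)))
          ≤ ENNReal.ofReal C *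
            ∫⁻ x in cube n z ℓ, ENNReal.ofReal (φ x |f x|) := by
  have hp0 : (0:ℝ) < p := lt_trans one_pos hp
  have hq0 : (0:ℝ) < q := lt_trans hp0 hpq
  set C₁ : ℝ := C₀ + 1 + p * C₀ / q with hC₁def
  have hC₁ : 0 < C₁ := by positivity
  refine ⟨C₁, hC₁, ?_⟩
  intro f hf hfp z ℓ hℓ hℓ1
  set Q : Set (Fin n → ℝ) := cube n z ℓ with hQdef
  have hQmeas : MeasurableSet Q := cube_measurable n z ℓ
  set V : ℝ := ℓ ^ n with hVdef
  have hV0 : 0 < V := by positivity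
  have hQvol : volume Q = ENNReal.ofReal V := cube_volume n z ℓ hℓ.le
  set μ : Measure (Fin n → ℝ) := volume.restrict Q with hμdef
  have hμuniv : μ Set.univ = ENNReal.ofReal V := by
    rw [hμdef, Measure.restrict_apply_univ, hQvol]
  haveI : IsFiniteMeasure μ := ⟨by rw [hμuniv]; exact ENNReal.ofReal_lt_top⟩
  haveI : NeZero μ := ⟨by
    intro h
    have h2 := hμuniv
    rw [h] at h2
    simp only [Measure.coe_zero, Pi.zero_apply] at h2
    exact absurd h2.symm (by simp [ENNReal.ofReal_eq_zero, not_le, hV0])⟩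
  have hμtoReal : μ.real Set.univ = V := by show (μ Set.univ).toReal = V; rw [hμuniv, ENNReal.toReal_ofReal hV0.le]
  set t : ℝ := (ℓ ^ n)⁻¹ * ∫ y in Q, |f y| with htdef
  have ht0 : 0 ≤ t := by
    apply mul_nonneg (by positivity)
    exact integral_nonneg fun x => abs_nonneg _
  by_cases hRHS : (∫⁻ x in Q, ENNReal.ofReal (φ x |f x|)) = ⊤
  · rw [hRHS, ENNReal.mul_top (by simp [ENNReal.ofReal_eq_zero, not_le, hC₁])]
    exact le_top
  -- measurability facts
  have habs : Measurable fun x => |f x| := hf.abs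
  have hpowmeas : ∀ r : ℝ, 0 ≤ r → Measurable fun x : Fin n → ℝ => |f x| ^ r := fun r hr =>
    (Real.continuous_rpow_const hr).measurable.comp habs
  have hφfmeas : Measurable fun x => φ x |f x| := by
    simp_rw [hφ]
    exact ((hpowmeas p hp0.le).const_mul _).add ((hameas.const_mul _).mul (hpowmeas q hq0.le))
  have hφfnn : ∀ x, 0 ≤ φ x |f x| := by
    intro x; rw [hφ]
    have := ha x
    positivity
  -- integrability of |f|^p
  have hfp_lint : (∫⁻ x, ENNReal.ofReal (|f x| ^ p) ∂μ) ≤ 1 :=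
    le_trans (lintegral_mono' Measure.restrict_le_self (le_refl _)) hfp
  have hfp_int : Integrable (fun x => |f x| ^ p) μ :=
    integrable_of_lint_ne_top (hpowmeas p hp0.le) (fun x => by positivity)
      (by exact ne_top_of_le_ne_top ENNReal.one_ne_top hfp_lint)
  -- integrability of |f|
  have hf1_int : Integrable (fun x => |f x|) μ := by
    refine Integrable.mono' (g := fun x => 1 + |f x| ^ p)
      ((integrable_const 1).add hfp_int) habs.aestronglyMeasurable ?_
    filter_upwards with x
    rw [Real.norm_eq_abs, abs_abs]
    rcases le_or_gt (|f x|) 1 with h | h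
    · nlinarith [Real.rpow_nonneg (abs_nonneg (f x)) p]
    · have : |f x| ^ (1:ℝ) ≤ |f x| ^ p :=
        Real.rpow_le_rpow_of_exponent_le h.le hp.le
      rw [Real.rpow_one] at this
      linarith
  -- integrability of φ(x, |f x|)
  have hφf_int : Integrable (fun x => φ x |f x|) μ :=
    integrable_of_lint_ne_top hφfmeas hφfnn hRHS
  -- integrability of a * |f|^q
  have haq_meas : Measurable fun x => a x * |f x| ^ q := hameas.mul (hpowmeas q hq0.le)
  have haq_int : Integrable (fun x => a x * |f x| ^ q) μ := by
    refine Integrable.mono' (g := fun x => q * φ x |f x|) (hφf_int.const_mul q)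
      haq_meas.aestronglyMeasurable ?_
    filter_upwards with x
    have h1 : 0 ≤ a x * |f x| ^ q := mul_nonneg (ha x) (by positivity)
    rw [Real.norm_eq_abs, abs_of_nonneg h1, hφ]
    have h2 : 0 ≤ |f x| ^ p := by positivity
    have h3 : q * ((1/q) * a x * |f x| ^ q) = a x * |f x| ^ q := by
      field_simp
    have h4 : 0 ≤ q * ((1/p) * |f x| ^ p) := by positivity
    nlinarith [h3, h4]
  -- integrability of a
  have ha_int : Integrable a μ := by
    refine Integrable.mono' (g := fun _ => M) (integrable_const M) hameas.aestronglyMeasurable ?_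
    filter_upwards with x
    rw [Real.norm_eq_abs, abs_of_nonneg (ha x)]
    exact haM x
  -- t as an average
  have htavg : t = ⨍ x, |f x| ∂μ := by
    rw [average_eq, hμtoReal, smul_eq_mul, htdef, hμdef, hVdef]
  -- Jensen for exponent r
  have hjensen : ∀ r : ℝ, 1 ≤ r → Integrable (fun x => |f x| ^ r) μ →
      t ^ r ≤ V⁻¹ * ∫ x, |f x| ^ r ∂μ := by
    intro r hr hint
    have := (convexOn_rpow hr).map_average_le
      ((Real.continuous_rpow_const (by linarith : (0:ℝ) ≤ r)).continuousOn)
      isClosed_Ici (Filter.Eventually.of_forall fun x => abs_nonneg (f x)) hf1_int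
      (by exact hint)
    rw [← htavg] at this
    calc t ^ r ≤ ⨍ x, |f x| ^ r ∂μ := this
      _ = V⁻¹ * ∫ x, |f x| ^ r ∂μ := by rw [average_eq, hμtoReal, smul_eq_mul]
  -- I_p ≤ 1
  have hIp0 : 0 ≤ ∫ x, |f x| ^ p ∂μ := integral_nonneg fun x => by positivity
  have hfp_ofReal : ENNReal.ofReal (∫ x, |f x| ^ p ∂μ) = ∫⁻ x, ENNReal.ofReal (|f x| ^ p) ∂μ :=
    ofReal_integral_eq_lintegral_ofReal hfp_int (Filter.Eventually.of_forall fun x => by positivity)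
  have hIp1 : (∫ x, |f x| ^ p ∂μ) ≤ 1 := by
    rw [← hfp_ofReal] at hfp_lint
    exact ENNReal.ofReal_le_one.mp hfp_lint
  -- ℓ ≤ 1
  have hℓle1 : ℓ ≤ 1 := by
    by_contra h
    push_neg at h
    have h2 : (1:ℝ) < ℓ ^ n := one_lt_pow₀ h hn.ne'
    linarith
  -- exponent inequality
  have hn0 : (0:ℝ) < n := Nat.cast_pos.mpr hn
  have hexp : (n:ℝ) * (q - p) / p ≤ α := by
    rw [div_le_iff₀ hp0] at hgap ⊢
    have h1 : (1 + α / n) * p = p + α / n * p := by ring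
    have h2 : (n:ℝ) * (α / n * p) = α * p := by field_simp
    nlinarith [mul_le_mul_of_nonneg_left (by linarith : q - p ≤ α / n * p) hn0.le]
  -- key inequality : ℓ^α * t^q ≤ t^p
  have hkey : ℓ ^ α * t ^ q ≤ t ^ p := by
    rcases eq_or_lt_of_le ht0 with h0 | htpos
    · rw [← h0, Real.zero_rpow (ne_of_gt hq0), Real.zero_rpow (ne_of_gt hp0), mul_zero]
    · have htp : t ^ p ≤ V⁻¹ := by
        calc t ^ p ≤ V⁻¹ * ∫ x, |f x| ^ p ∂μ := hjensen p hp.le hfp_int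
          _ ≤ V⁻¹ * 1 := mul_le_mul_of_nonneg_left hIp1 (by positivity)
          _ = V⁻¹ := mul_one _
      have hVinv : V⁻¹ = ℓ ^ (-(n:ℝ)) := by
        rw [hVdef, ← Real.rpow_natCast ℓ n, Real.rpow_neg hℓ.le]
      have h1 : (t ^ p) ^ p⁻¹ = t := Real.rpow_rpow_inv ht0 (ne_of_gt hp0)
      have h2 : (t ^ p) ^ p⁻¹ ≤ (V⁻¹) ^ p⁻¹ :=
        Real.rpow_le_rpow (Real.rpow_nonneg ht0 p) htp (by positivity)
      have h3 : (V⁻¹) ^ p⁻¹ = ℓ ^ (-(n:ℝ) * p⁻¹) := by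
        rw [hVinv, ← Real.rpow_mul hℓ.le]
      have ht_le : t ≤ ℓ ^ (-(n:ℝ) * p⁻¹) := by rw [← h1, ← h3]; exact h2
      have h4 : t ^ (q - p) ≤ ℓ ^ (-(n:ℝ) * p⁻¹ * (q - p)) := by
        rw [Real.rpow_mul hℓ.le]
        exact Real.rpow_le_rpow ht0 ht_le (by linarith)
      have h5 : ℓ ^ (-(n:ℝ) * p⁻¹ * (q - p)) ≤ ℓ ^ (-α) := by
        apply Real.rpow_le_rpow_of_exponent_ge hℓ hℓle1
        have h6 : (n:ℝ) * p⁻¹ * (q - p) = (n:ℝ) * (q - p) / p := by ring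
        nlinarith [hexp]
      have hq' : t ^ q = t ^ p * t ^ (q - p) := by
        rw [← Real.rpow_add htpos]; congr 1; ring
      have h7 : t ^ (q - p) ≤ ℓ ^ (-α) := le_trans h4 h5
      have h8 : ℓ ^ α * ℓ ^ (-α) = 1 := by
        rw [← Real.rpow_add hℓ]; simp
      calc ℓ ^ α * t ^ q = t ^ p * (ℓ ^ α * t ^ (q - p)) := by rw [hq']; ring
        _ ≤ t ^ p * (ℓ ^ α * ℓ ^ (-α)) := by
            apply mul_le_mul_of_nonneg_left _ (Real.rpow_nonneg ht0 p)
            exact mul_le_mul_of_nonneg_left h7 (Real.rpow_nonneg hℓ.le α)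
        _ = t ^ p := by rw [h8, mul_one]
  -- the infimum of a on Q
  have hQne : Q.Nonempty := ⟨z, fun i => ⟨le_refl _, by linarith⟩⟩
  set A : ℝ := sInf (a '' Q) with hAdef
  have hbdd : BddBelow (a '' Q) := ⟨0, by rintro _ ⟨y, _, rfl⟩; exact ha y⟩
  have hA0 : 0 ≤ A := le_csInf (hQne.image a) (by rintro _ ⟨y, _, rfl⟩; exact ha y)
  have hAle : ∀ y ∈ Q, A ≤ a y := fun y hy => csInf_le hbdd ⟨y, hy, rfl⟩
  have haup : ∀ x ∈ Q, a x ≤ C₀ * (A + ℓ ^ α) := by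
    intro x hx
    have h1 : (a x - C₀ * ℓ ^ α) / C₀ ≤ A := by
      apply le_csInf (hQne.image a)
      rintro _ ⟨y, hy, rfl⟩
      have h2 := hahold z ℓ hℓ hℓ1 x hx y hy
      have h3 : ‖x - y‖ ^ α ≤ ℓ ^ α :=
        Real.rpow_le_rpow (norm_nonneg _) (norm_sub_le_of_mem_cube n z ℓ hℓ.le hx hy) hα.le
      rw [div_le_iff₀ hC₀]
      nlinarith [h2, h3]
    have h5 : C₀ * ((a x - C₀ * ℓ ^ α) / C₀) = a x - C₀ * ℓ ^ α := by field_simp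
    nlinarith [mul_le_mul_of_nonneg_left h1 hC₀.le]
  -- bound for the integral of a
  have hint_a : ∫ x, a x ∂μ ≤ V * (C₀ * (A + ℓ ^ α)) := by
    have h1 : ∫ x, a x ∂μ ≤ ∫ _x, C₀ * (A + ℓ ^ α) ∂μ := by
      apply integral_mono_ae ha_int (integrable_const _)
      filter_upwards [ae_restrict_mem hQmeas] with x hx using haup x hx
    have h2 : ∫ _x, C₀ * (A + ℓ ^ α) ∂μ = V * (C₀ * (A + ℓ ^ α)) := by
      rw [integral_const, hμtoReal, smul_eq_mul]
    linarith
  -- p-term Jensen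
  have hAp : V * t ^ p ≤ ∫ x, |f x| ^ p ∂μ := by
    have h := mul_le_mul_of_nonneg_left (hjensen p hp.le hfp_int) hV0.le
    rwa [← mul_assoc, mul_inv_cancel₀ (ne_of_gt hV0), one_mul] at h
  -- q-term bound
  have hIaq0 : 0 ≤ ∫ x, a x * |f x| ^ q ∂μ :=
    integral_nonneg fun x => mul_nonneg (ha x) (by positivity)
  have hB : A * (V * t ^ q) ≤ ∫ x, a x * |f x| ^ q ∂μ := by
    rcases eq_or_lt_of_le hA0 with h0 | hApos
    · rw [← h0, zero_mul]; exact hIaq0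
    · have hq_int : Integrable (fun x => |f x| ^ q) μ := by
        refine Integrable.mono' (g := fun x => A⁻¹ * (a x * |f x| ^ q)) (haq_int.const_mul _)
          (hpowmeas q hq0.le).aestronglyMeasurable ?_
        filter_upwards [ae_restrict_mem hQmeas] with x hx
        rw [Real.norm_eq_abs, abs_of_nonneg (by positivity)]
        have h1 := hAle x hx
        have h2 : 0 ≤ |f x| ^ q := by positivity
        rw [← mul_le_mul_iff_right₀ hApos]
        have h3 : A * (A⁻¹ * (a x * |f x| ^ q)) = a x * |f x| ^ q := by field_simp
        nlinarith [mul_le_mul_of_nonneg_right h1 h2]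
      have hJq := hjensen q (by linarith) hq_int
      have h4 : V * t ^ q ≤ ∫ x, |f x| ^ q ∂μ := by
        have h := mul_le_mul_of_nonneg_left hJq hV0.le
        rwa [← mul_assoc, mul_inv_cancel₀ (ne_of_gt hV0), one_mul] at h
      have h6 : ∫ x, A * |f x| ^ q ∂μ ≤ ∫ x, a x * |f x| ^ q ∂μ := by
        apply integral_mono_ae (hq_int.const_mul A) haq_int
        filter_upwards [ae_restrict_mem hQmeas] with x hx
        exact mul_le_mul_of_nonneg_right (hAle x hx) (by positivity)
      calc A * (V * t ^ q) ≤ A * ∫ x, |f x| ^ q ∂μ := mul_le_mul_of_nonneg_left h4 hA0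
        _ = ∫ x, A * |f x| ^ q ∂μ := (integral_const_mul _ _).symm
        _ ≤ _ := h6
  -- splitting the integrals
  have hφt_int : Integrable (fun x => φ x t) μ := by
    simp_rw [hφ]
    exact (integrable_const _).add ((ha_int.const_mul _).mul_const _)
  have hLHSsplit : ∫ x, φ x t ∂μ = (1/p) * t ^ p * V + (1/q) * (∫ x, a x ∂μ) * t ^ q := by
    simp_rw [hφ]
    rw [integral_add (integrable_const _) ((ha_int.const_mul _).mul_const _),
        integral_const, hμtoReal, smul_eq_mul]
    have h1 : ∫ x, (1/q) * a x * t ^ q ∂μ = (1/q) * (∫ x, a x ∂μ) * t ^ q := by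
      calc ∫ x, (1/q) * a x * t ^ q ∂μ = ∫ x, (1/q) * (a x * t ^ q) ∂μ := by
            simp_rw [mul_assoc]
        _ = (1/q) * ∫ x, a x * t ^ q ∂μ := integral_const_mul _ _
        _ = (1/q) * ((∫ x, a x ∂μ) * t ^ q) := by rw [integral_mul_const]
        _ = (1/q) * (∫ x, a x ∂μ) * t ^ q := by ring
    rw [h1]; ring
  have hRHSsplit : ∫ x, φ x |f x| ∂μ
      = (1/p) * (∫ x, |f x| ^ p ∂μ) + (1/q) * (∫ x, a x * |f x| ^ q ∂μ) := by
    simp_rw [hφ, mul_assoc]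
    rw [integral_add (hfp_int.const_mul _) (haq_int.const_mul _),
        integral_const_mul, integral_const_mul]
  -- the real inequality
  have hreal : ∫ x, φ x t ∂μ ≤ C₁ * ∫ x, φ x |f x| ∂μ := by
    rw [hLHSsplit, hRHSsplit]
    have hcoef1 : 1/p + C₀/q ≤ C₁ * (1/p) := by
      have h1 : C₁ * (1/p) = C₀ * (1/p) + 1/p + (C₀/q) * (p * (1/p)) := by
        rw [hC₁def]; ring
      have h2 : p * (1/p) = 1 := by field_simp
      have h3 : 0 ≤ C₀ * (1/p) := by positivity
      rw [h2, mul_one] at h1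
      linarith
    have hcoef2 : C₀/q ≤ C₁ * (1/q) := by
      have hC₀C₁ : C₀ ≤ C₁ := by
        rw [hC₁def]
        nlinarith [div_nonneg (mul_nonneg hp0.le hC₀.le) hq0.le]
      calc C₀/q = C₀ * (1/q) := by ring
        _ ≤ C₁ * (1/q) := mul_le_mul_of_nonneg_right hC₀C₁ (by positivity)
    have hstep1 : (1/q) * (∫ x, a x ∂μ) * t ^ q ≤ (1/q) * (V * (C₀ * (A + ℓ ^ α))) * t ^ q := by
      apply mul_le_mul_of_nonneg_right _ (Real.rpow_nonneg ht0 q)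
      exact mul_le_mul_of_nonneg_left hint_a (by positivity)
    have hstep1' : (1/q) * (∫ x, a x ∂μ) * t ^ q
        ≤ (C₀/q) * (A * (V * t ^ q)) + (C₀/q) * (V * (ℓ ^ α * t ^ q)) := by
      calc (1/q) * (∫ x, a x ∂μ) * t ^ q
          ≤ (1/q) * (V * (C₀ * (A + ℓ ^ α))) * t ^ q := hstep1
        _ = (C₀/q) * (A * (V * t ^ q)) + (C₀/q) * (V * (ℓ ^ α * t ^ q)) := by ring
    have hVkey : V * (ℓ ^ α * t ^ q) ≤ V * t ^ p := mul_le_mul_of_nonneg_left hkey hV0.le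
    have g1 : (1/p) * (V * t ^ p) ≤ (1/p) * ∫ x, |f x| ^ p ∂μ :=
      mul_le_mul_of_nonneg_left hAp (by positivity)
    have g2 : (C₀/q) * (A * (V * t ^ q)) ≤ (C₀/q) * ∫ x, a x * |f x| ^ q ∂μ :=
      mul_le_mul_of_nonneg_left hB (by positivity)
    have g3 : (C₀/q) * (V * (ℓ ^ α * t ^ q)) ≤ (C₀/q) * (V * t ^ p) :=
      mul_le_mul_of_nonneg_left hVkey (by positivity)
    have g4 : (C₀/q) * (V * t ^ p) ≤ (C₀/q) * ∫ x, |f x| ^ p ∂μ :=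
      mul_le_mul_of_nonneg_left hAp (by positivity)
    have g5 : (1/p + C₀/q) * (∫ x, |f x| ^ p ∂μ) ≤ (C₁ * (1/p)) * ∫ x, |f x| ^ p ∂μ :=
      mul_le_mul_of_nonneg_right hcoef1 hIp0
    have g6 : (C₀/q) * (∫ x, a x * |f x| ^ q ∂μ) ≤ (C₁ * (1/q)) * ∫ x, a x * |f x| ^ q ∂μ :=
      mul_le_mul_of_nonneg_right hcoef2 hIaq0
    linarith [hstep1', g1, g2, g3, g4, g5, g6]
  -- conclude
  have hφtnn : ∀ x, 0 ≤ φ x t := by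
    intro x; rw [hφ]
    have h1 := ha x
    positivity
  calc (∫⁻ x in Q, ENNReal.ofReal (φ x t))
      = ENNReal.ofReal (∫ x, φ x t ∂μ) :=
        (ofReal_integral_eq_lintegral_ofReal hφt_int (Filter.Eventually.of_forall hφtnn)).symm
    _ ≤ ENNReal.ofReal (C₁ * ∫ x, φ x |f x| ∂μ) := ENNReal.ofReal_le_ofReal hreal
    _ = ENNReal.ofReal C₁ * ENNReal.ofReal (∫ x, φ x |f x| ∂μ) := ENNReal.ofReal_mul hC₁.le
    _ = ENNReal.ofReal C₁ * ∫⁻ x in Q, ENNReal.ofReal (φ x |f x|) := by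
        rw [ofReal_integral_eq_lintegral_ofReal hφf_int (Filter.Eventually.of_forall hφfnn)]
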